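/- Let A be a commutative monoid and F an A-module. Equip the free abelian group ℤ[F] (finitely supported functions F → ℤ) with the module structure over ℤ[A] = MonoidAlgebra ℤ A obtained by extending the A-action on the basis F ℤ-bilinearly. If ℤ[F] is a flat ℤ[A]-module (in the usual ring-theoretic sense), then F is a flat A-module. -/

import Mathlib

/-- The elementary relation `(a • m, n) ∼ (m, a • n)` generating the tensor product of two
modules over a commutative monoid `A`. -/
def MonTensor.Rel (A : Type*) [CommMonoid A] (M N : Type*) [MulAction A M] [MulAction A N] :
    M × N → M × N → Prop :=
  fun p q => ∃ (a : A) (m : M) (n : N), p = (a • m, n) ∧ q = (m, a • n)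

/-- The tensor product `M ⊗_A N` of two modules over a commutative monoid `A`: the quotient
of `M × N` by the equivalence relation generated by `(a • m, n) ∼ (m, a • n)`. -/
def MonTensor (A : Type*) [CommMonoid A] (M N : Type*) [MulAction A M] [MulAction A N] :=
  Quot (MonTensor.Rel A M N)

/-- The map `F ⊗_A M → F ⊗_A N` induced by an `A`-equivariant map `f : M → N`. -/
def MonTensor.map (A : Type*) [CommMonoid A] {F M N : Type*}
    [MulAction A F] [MulAction A M] [MulAction A N]
    (f : M → N) (hf : ∀ (a : A) (m : M), f (a • m) = a • f m) :
    MonTensor A F M → MonTensor A F N :=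
  Quot.map (fun p => (p.1, f p.2)) (by
    rintro p q ⟨a, m, n, h1, h2⟩
    subst h1; subst h2
    exact ⟨a, m, f n, rfl, by simp [hf]⟩)

/-- A module `F` over a commutative monoid `A` is flat if for every injective
`A`-equivariant map `M → N` the induced map `F ⊗_A M → F ⊗_A N` is injective. -/
def MonIsFlat (A : Type*) [CommMonoid A] (F : Type*) [MulAction A F] : Prop :=
  ∀ (M N : Type*) (_ : MulAction A M) (_ : MulAction A N)
    (f : M → N) (hf : ∀ (a : A) (m : M), f (a • m) = a • f m),
    Function.Injective f → Function.Injective (MonTensor.map A (F := F) f hf)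

section Aux

open Finsupp TensorProduct

variable (A : Type*) [CommMonoid A]

/-- Abbreviation for the `ℤ[A]`-module `ℤ[X]` attached to an `A`-set `X`. -/
noncomputable abbrev ZMod' (X : Type*) [MulAction A X] :=
  (Representation.ofMulAction ℤ A X).asModule

/-- The canonical additive equivalence `ℤ[X] ≃+ (X →₀ ℤ)`. -/
noncomputable abbrev eZ (X : Type*) [MulAction A X] : ZMod' A X ≃+ (X →₀ ℤ) :=
  (Representation.ofMulAction ℤ A X).asModuleEquiv.toAddEquiv.trans MonoidAlgebra.coeffAddEquiv

/-- The key scalar computation in `ℤ[X]`. -/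
theorem smul_eZ_symm_single (X : Type*) [MulAction A X] (a : A) (c : ℤ) (x : X) (b : ℤ) :
    (MonoidAlgebra.single a c : MonoidAlgebra ℤ A) • ((eZ A X).symm (Finsupp.single x b))
      = (eZ A X).symm (Finsupp.single (a • x) (c * b)) := by
  apply (eZ A X).injective
  simp only [eZ, AddEquiv.trans_apply, AddEquiv.symm_trans_apply, LinearEquiv.coe_toAddEquiv, LinearEquiv.coe_toAddEquiv_symm, Representation.asModuleEquiv_map_smul, LinearEquiv.apply_symm_apply, AddEquiv.apply_symm_apply]
  simp [MonoidAlgebra.ofCoeff_single, Representation.asAlgebraHom_single, Representation.ofMulAction_single, smul_single,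
    mul_comm, -Finsupp.single_mul]
  rfl

variable {F M N : Type*} [MulAction A F] [MulAction A M] [MulAction A N]

/-- `B₀ : (F →₀ ℤ) →+ (M →₀ ℤ) →+ (MonTensor A F M →₀ ℤ)`, the bilinear extension of
`(x, m) ↦ single (x ⊗ m) 1`. -/
noncomputable def B0 : (F →₀ ℤ) →+ (M →₀ ℤ) →+ (MonTensor A F M →₀ ℤ) :=
  Finsupp.liftAddHom (fun x =>
    (zmultiplesHom _) (Finsupp.liftAddHom (fun m =>
      Finsupp.singleAddHom (Quot.mk (MonTensor.Rel A F M) (x, m)))))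

theorem B0_single_single (x : F) (c : ℤ) (m : M) (d : ℤ) :
    B0 A (Finsupp.single x c) (Finsupp.single m d)
      = Finsupp.single (Quot.mk (MonTensor.Rel A F M) (x, m)) (c * d) := by
  simp only [B0, Finsupp.liftAddHom_apply_single]
  simp [zmultiplesHom_apply, Finsupp.smul_single, mul_comm, -Finsupp.single_mul]
  show c • Finsupp.single (Quot.mk (MonTensor.Rel A F M) (x, m) : MonTensor A F M) d = _
  rw [Finsupp.smul_single, smul_eq_mul]

/-- The bilinear map `ℤ[F] →+ ℤ[M] →+ ℤ[F ⊗_A M]`. -/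
noncomputable def Bmap : ZMod' A F →+ ZMod' A M →+ (MonTensor A F M →₀ ℤ) where
  toFun p := ((B0 A) ((eZ A F) p)).comp (eZ A M).toAddMonoidHom
  map_zero' := by ext q; simp
  map_add' p q := by ext r; simp

theorem Bmap_apply (p : ZMod' A F) (q : ZMod' A M) :
    Bmap A p q = B0 A ((eZ A F) p) ((eZ A M) q) := rfl

theorem Bmap_balanced (r : MonoidAlgebra ℤ A) (p : ZMod' A F) (q : ZMod' A M) :
    Bmap A (r • p) q = Bmap A p (r • q) := by
  induction r using MonoidAlgebra.induction_linear with
  | zero => simp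
  | add r s hr hs =>
    rw [add_smul, add_smul, map_add, AddMonoidHom.add_apply, hr, hs, map_add]
  | single a c =>
    obtain ⟨v, rfl⟩ := (eZ A F).symm.surjective p
    obtain ⟨w, rfl⟩ := (eZ A M).symm.surjective q
    induction v using Finsupp.induction_linear with
    | zero => simp; rfl
    | add v v' hv hv' =>
      simp only [map_add, smul_add, AddMonoidHom.add_apply, hv, hv']
    | single x b =>
      induction w using Finsupp.induction_linear with
      | zero => simp
      | add w w' hw hw' =>
        simp only [map_add, smul_add, hw, hw']
      | single m d =>
        rw [smul_eZ_symm_single, smul_eZ_symm_single]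
        simp only [Bmap_apply, AddEquiv.apply_symm_apply, B0_single_single]
        rw [Quot.sound (⟨a, x, m, rfl, rfl⟩ :
          MonTensor.Rel A F M (a • x, m) (x, a • m))]
        ring_nf
        rfl

/-- The additive map `ℤ[F] ⊗[ℤ[A]] ℤ[M] →+ ℤ[F ⊗_A M]`. -/
noncomputable def psi :
    (ZMod' A F ⊗[MonoidAlgebra ℤ A] ZMod' A M) →+ (MonTensor A F M →₀ ℤ) :=
  TensorProduct.liftAddHom (Bmap A) (Bmap_balanced A)

/-- The canonical map `F ⊗_A M → ℤ[F] ⊗[ℤ[A]] ℤ[M]`. -/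
noncomputable def iotaT : MonTensor A F M → (ZMod' A F ⊗[MonoidAlgebra ℤ A] ZMod' A M) :=
  Quot.lift (fun p => (eZ A F).symm (Finsupp.single p.1 1) ⊗ₜ (eZ A M).symm (Finsupp.single p.2 1))
    (by
      rintro p q ⟨a, m, n, rfl, rfl⟩
      have h1 : (eZ A F).symm (Finsupp.single (a • m) 1)
          = (MonoidAlgebra.single a 1 : MonoidAlgebra ℤ A) • (eZ A F).symm (Finsupp.single m 1) := by
        rw [smul_eZ_symm_single]; norm_num
      have h2 : (eZ A M).symm (Finsupp.single (a • n) 1)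
          = (MonoidAlgebra.single a 1 : MonoidAlgebra ℤ A) • (eZ A M).symm (Finsupp.single n 1) := by
        rw [smul_eZ_symm_single]; norm_num
      simp only [h1, h2]
      exact TensorProduct.smul_tmul _ _ _)

theorem psi_iotaT (t : MonTensor A F M) :
    psi A (iotaT A t) = Finsupp.single t 1 := by
  induction t using Quot.ind with
  | _ p =>
    show psi A ((eZ A F).symm (Finsupp.single p.1 1) ⊗ₜ (eZ A M).symm (Finsupp.single p.2 1)) = _
    rw [psi, TensorProduct.liftAddHom_tmul, Bmap_apply]
    simp [B0_single_single]
    rfl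

theorem iotaT_injective : Function.Injective (iotaT A (F := F) (M := M)) := by
  intro s t h
  have := congrArg (psi A) h
  rw [psi_iotaT, psi_iotaT] at this
  exact Finsupp.single_left_injective one_ne_zero this

/-- The `ℤ[A]`-linear map `ℤ[M] → ℤ[N]` induced by an equivariant map `f : M → N`. -/
noncomputable def Lmap (f : M → N) (hf : ∀ (a : A) (m : M), f (a • m) = a • f m) :
    ZMod' A M →ₗ[MonoidAlgebra ℤ A] ZMod' A N where
  toFun p := (eZ A N).symm (Finsupp.mapDomain f ((eZ A M) p))
  map_add' p q := by simp [Finsupp.mapDomain_add]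
  map_smul' r p := by
    simp only [RingHom.id_apply]
    induction r using MonoidAlgebra.induction_linear with
    | zero => simp
    | add r s hr hs =>
      simp only [add_smul, map_add, Finsupp.mapDomain_add, hr, hs]
    | single a c =>
      obtain ⟨v, rfl⟩ := (eZ A M).symm.surjective p
      induction v using Finsupp.induction_linear with
      | zero => simp
      | add v v' hv hv' =>
        simp only [map_add, smul_add, Finsupp.mapDomain_add, hv, hv']
      | single m b =>
        rw [smul_eZ_symm_single]
        simp only [AddEquiv.apply_symm_apply, Finsupp.mapDomain_single]
        rw [smul_eZ_symm_single, hf]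

theorem Lmap_injective (f : M → N) (hf : ∀ (a : A) (m : M), f (a • m) = a • f m)
    (hinj : Function.Injective f) :
    Function.Injective (Lmap A f hf) := by
  intro p q h
  apply (eZ A M).injective
  exact Finsupp.mapDomain_injective hinj ((eZ A N).symm.injective h)

theorem iotaT_naturality (f : M → N) (hf : ∀ (a : A) (m : M), f (a • m) = a • f m)
    (t : MonTensor A F M) :
    iotaT A (MonTensor.map A (F := F) f hf t)
      = LinearMap.lTensor (ZMod' A F) (Lmap A f hf) (iotaT A t) := by
  induction t using Quot.ind with
  | _ p =>
    show (eZ A F).symm (Finsupp.single p.1 1) ⊗ₜ (eZ A N).symm (Finsupp.single (f p.2) 1)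
      = LinearMap.lTensor _ _ ((eZ A F).symm (Finsupp.single p.1 1) ⊗ₜ
          (eZ A M).symm (Finsupp.single p.2 1))
    rw [LinearMap.lTensor_tmul]
    congr 1
    show _ = (eZ A N).symm (Finsupp.mapDomain f ((eZ A M) ((eZ A M).symm (Finsupp.single p.2 1))))
    rw [AddEquiv.apply_symm_apply, Finsupp.mapDomain_single]

end Aux

/-- Let `A` be a commutative monoid and `F` an `A`-module. Equip the free
abelian group `ℤ[F]` with the `ℤ[A] = MonoidAlgebra ℤ A`-module structure extending the
`A`-action on the basis `F` ℤ-bilinearly (i.e. the module associated to the permutation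
representation `Representation.ofMulAction ℤ A F`).  If `ℤ[F]` is flat as a
`ℤ[A]`-module, then `F` is flat as an `A`-module. -/
theorem stmt_11 (A : Type*) [CommMonoid A] (F : Type*) [MulAction A F]
    (hflat : Module.Flat (MonoidAlgebra ℤ A) (Representation.ofMulAction ℤ A F).asModule) :
    MonIsFlat A F := by
  intro M N _ _ f hf hinj s t h
  apply iotaT_injective A
  have hL : Function.Injective (LinearMap.lTensor (ZMod' A F) (Lmap A f hf)) :=
    Module.Flat.lTensor_preserves_injective_linearMap (M := ZMod' A F)
      (Lmap A f hf) (Lmap_injective A f hf hinj)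
  apply hL
  rw [← iotaT_naturality, ← iotaT_naturality, h]
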